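/- arXiv:1208.2823 — 5 statements merged into one kernel-verified Lean document; each statement's English description precedes it below -/
import Mathlib

section
/- The decomposition of a real subspace of ℂ^n into subspaces of constant Kähler angle is unique: if V = V_1 ⊕ ⋯ ⊕ V_r and V = W_1 ⊕ ⋯ ⊕ W_s are two families of nonzero real subspaces of ℂ^n such that each family is an orthogonal direct sum decomposition of V, each V_i has constant Kähler angle φ_i with φ_1 < ⋯ < φ_r, each W_j has constant Kähler angle ψ_j with ψ_1 < ⋯ < ψ_s (all angles in [0, π/2]), and in each family the Hermitian inner product ⟪v, w⟫ vanishes for vectors from distinct members, then r = s, φ_i = ψ_i for all i, and V_i = W_i for all i. -/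
noncomputable section

/-- `ℂ^n` as a Euclidean space. -/
abbrev En (n : ℕ) : Type := EuclideanSpace ℂ (Fin n)

/-- The complex structure `J`, multiplication by `i`. -/
def Jc {n : ℕ} (x : En n) : En n := Complex.I • x

/-- A real subspace `V` of `ℂ^n` has constant Kähler angle `φ` if
`‖π_V (J v)‖² = cos²(φ) ‖v‖²` for all `v ∈ V`. -/
def HasConstKahlerAngle {n : ℕ} (V : Submodule ℝ (En n)) (φ : ℝ) : Prop :=
  ∀ v ∈ V, ‖(V.orthogonalProjectionOnto (Jc v) : En n)‖ ^ 2 = Real.cos φ ^ 2 * ‖v‖ ^ 2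

namespace KahlerAux

variable {n : ℕ}

lemma re_inner (x y : En n) : (inner ℝ x y : ℝ) = Complex.re (inner ℂ x y : ℂ) := by
  rw [PiLp.inner_apply, PiLp.inner_apply, Complex.re_sum]
  rfl

lemma Jc_add (x y : En n) : Jc (x + y) = Jc x + Jc y := smul_add _ _ _

lemma Jc_zero : Jc (0 : En n) = 0 := smul_zero _

lemma real_inner_Jc_left {x y : En n} (h : (inner ℂ x y : ℂ) = 0) :
    (inner ℝ (Jc x) y : ℝ) = 0 := by
  rw [re_inner]
  unfold Jc
  rw [inner_smul_left, h, mul_zero]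
  rfl

lemma inner_right_of_iSup {m : ℕ} {Us : Fin m → Submodule ℝ (En n)} {x : En n}
    (h : ∀ k, ∀ w ∈ Us k, (inner ℝ x w : ℝ) = 0) :
    ∀ u ∈ (⨆ k, Us k : Submodule ℝ (En n)), (inner ℝ x u : ℝ) = 0 := by
  intro u hu
  refine Submodule.iSup_induction (motive := fun u => (inner ℝ x u : ℝ) = 0) Us hu h
    (inner_zero_right x) ?_
  intro a b ha hb
  rw [inner_add_right, ha, hb, add_zero]

lemma mem_of_orth {m : ℕ} {Us : Fin m → Submodule ℝ (En n)}
    (horth : ∀ k l, k ≠ l → ∀ v ∈ Us k, ∀ w ∈ Us l, (inner ℝ v w : ℝ) = 0)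
    {k : Fin m} {v : En n} (hv : v ∈ (⨆ l, Us l : Submodule ℝ (En n)))
    (hvo : ∀ l, l ≠ k → ∀ w ∈ Us l, (inner ℝ v w : ℝ) = 0) : v ∈ Us k := by
  set p : En n := (Submodule.orthogonalProjectionOnto (Us k) v : En n) with hp
  have hpmem : p ∈ Us k := SetLike.coe_mem _
  have hall : ∀ l, ∀ w ∈ Us l, (inner ℝ (v - p) w : ℝ) = 0 := by
    intro l w hw
    by_cases hl : l = k
    · subst hl
      exact Submodule.starProjection_inner_eq_zero v w hw
    · rw [inner_sub_left, hvo l hl w hw, horth k l (fun h => hl h.symm) p hpmem w hw, sub_zero]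
  have hv' : v - p ∈ (⨆ l, Us l : Submodule ℝ (En n)) :=
    Submodule.sub_mem _ hv (Submodule.mem_iSup_of_mem k hpmem)
  have h0 : v - p = 0 := by
    have := inner_right_of_iSup hall _ hv'
    rwa [inner_self_eq_zero] at this
  have : v = p := by rwa [sub_eq_zero] at h0
  rw [this]; exact hpmem

lemma proj_Jc_add (V : Submodule ℝ (En n)) (x y : En n) :
    (Submodule.orthogonalProjectionOnto V (Jc (x + y)) : En n)
      = (Submodule.orthogonalProjectionOnto V (Jc x) : En n) + (Submodule.orthogonalProjectionOnto V (Jc y) : En n) := by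
  rw [Jc_add, map_add]
  rfl

/-- The key identity: for `v` in a member of the family and `u ∈ V`,
`⟪π_V(Jv), π_V(Ju)⟫ = cos²(θ k) ⟪v, u⟫`. -/
lemma key {m : ℕ} (V : Submodule ℝ (En n)) (Us : Fin m → Submodule ℝ (En n)) (θ : Fin m → ℝ)
    (hsum : V = ⨆ k, Us k)
    (horth : ∀ k l, k ≠ l → ∀ v ∈ Us k, ∀ w ∈ Us l, (inner ℝ v w : ℝ) = 0)
    (hangle : ∀ k, HasConstKahlerAngle (Us k) (θ k))
    (hherm : ∀ k l, k ≠ l → ∀ v ∈ Us k, ∀ w ∈ Us l, (inner ℂ v w : ℂ) = 0)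
    (k : Fin m) {v : En n} (hv : v ∈ Us k) {u : En n} (hu : u ∈ V) :
    (inner ℝ (Submodule.orthogonalProjectionOnto V (Jc v) : En n)
      (Submodule.orthogonalProjectionOnto V (Jc u) : En n) : ℝ) = Real.cos (θ k) ^ 2 * (inner ℝ v u : ℝ) := by
  have hle : ∀ l, Us l ≤ V := fun l => hsum ▸ le_iSup Us l
  -- the projection onto V of J w equals the projection onto Us l, for w ∈ Us l
  have proj_eq : ∀ l, ∀ w ∈ Us l,
      (Submodule.orthogonalProjectionOnto V (Jc w) : En n) = (Submodule.orthogonalProjectionOnto (Us l) (Jc w) : En n) := by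
    intro l w hw
    rw [← Submodule.starProjection_apply V]
    apply Submodule.eq_starProjection_of_mem_of_inner_eq_zero (hle l (SetLike.coe_mem _))
    intro z hz
    rw [hsum] at hz
    revert z
    apply inner_right_of_iSup
    intro l' z hz
    by_cases hl : l' = l
    · subst hl
      exact Submodule.starProjection_inner_eq_zero (Jc w) z hz
    · rw [inner_sub_left, real_inner_Jc_left (hherm l l' (fun h => hl h.symm) w hw z hz),
        horth l l' (fun h => hl h.symm) _ (SetLike.coe_mem _) z hz, sub_zero]
  have Fmem : ∀ l, ∀ w ∈ Us l, (Submodule.orthogonalProjectionOnto V (Jc w) : En n) ∈ Us l := by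
    intro l w hw
    rw [proj_eq l w hw]
    exact SetLike.coe_mem _
  have Fnorm : ∀ w ∈ Us k, ‖(Submodule.orthogonalProjectionOnto V (Jc w) : En n)‖ ^ 2
      = Real.cos (θ k) ^ 2 * ‖w‖ ^ 2 := by
    intro w hw
    rw [proj_eq k w hw]
    exact hangle k w hw
  have polar : ∀ w₁ ∈ Us k, ∀ w₂ ∈ Us k,
      (inner ℝ (Submodule.orthogonalProjectionOnto V (Jc w₁) : En n)
        (Submodule.orthogonalProjectionOnto V (Jc w₂) : En n) : ℝ) = Real.cos (θ k) ^ 2 * inner ℝ w₁ w₂ := by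
    intro w₁ h₁ w₂ h₂
    have h12 := Fnorm (w₁ + w₂) (Submodule.add_mem _ h₁ h₂)
    rw [proj_Jc_add, norm_add_sq_real, norm_add_sq_real] at h12
    have e1 := Fnorm w₁ h₁
    have e2 := Fnorm w₂ h₂
    linear_combination (h12 - e1 - e2) / 2
  rw [hsum] at hu
  revert u
  have zero_case : (inner ℝ (Submodule.orthogonalProjectionOnto V (Jc v) : En n)
      (Submodule.orthogonalProjectionOnto V (Jc (0 : En n)) : En n) : ℝ) = Real.cos (θ k) ^ 2 * inner ℝ v 0 := by
    rw [Jc_zero, map_zero]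
    simp
  intro u hu
  refine Submodule.iSup_induction (motive := fun u => (inner ℝ (Submodule.orthogonalProjectionOnto V (Jc v) : En n)
      (Submodule.orthogonalProjectionOnto V (Jc u) : En n) : ℝ) = Real.cos (θ k) ^ 2 * inner ℝ v u) Us hu ?_
      zero_case ?_
  · intro l w hw
    by_cases hl : l = k
    · subst hl
      exact polar v hv w hw
    · rw [horth k l (fun h => hl h.symm) _ (Fmem k v hv) _ (Fmem l w hw),
        horth k l (fun h => hl h.symm) v hv w hw, mul_zero]
  · intro x y hx hy
    rw [proj_Jc_add, inner_add_right, inner_add_right, hx, hy, mul_add]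

end KahlerAux

open KahlerAux in
/-- Uniqueness of the Kähler angle decomposition of a real subspace of `ℂ^n`. -/
theorem kahler_angle_decomposition_unique (n : ℕ) (V : Submodule ℝ (En n))
    (r s : ℕ) (Vs : Fin r → Submodule ℝ (En n)) (Ws : Fin s → Submodule ℝ (En n))
    (φ : Fin r → ℝ) (ψ : Fin s → ℝ)
    (hφ : ∀ i, 0 ≤ φ i ∧ φ i ≤ Real.pi / 2)
    (hψ : ∀ j, 0 ≤ ψ j ∧ ψ j ≤ Real.pi / 2)
    (hφmono : StrictMono φ) (hψmono : StrictMono ψ)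
    (hVne : ∀ i, Vs i ≠ ⊥) (hWne : ∀ j, Ws j ≠ ⊥)
    (hVsum : V = ⨆ i, Vs i) (hWsum : V = ⨆ j, Ws j)
    (hVorth : ∀ i j, i ≠ j → ∀ v ∈ Vs i, ∀ w ∈ Vs j, (inner ℝ v w : ℝ) = 0)
    (hWorth : ∀ i j, i ≠ j → ∀ v ∈ Ws i, ∀ w ∈ Ws j, (inner ℝ v w : ℝ) = 0)
    (hVangle : ∀ i, HasConstKahlerAngle (Vs i) (φ i))
    (hWangle : ∀ j, HasConstKahlerAngle (Ws j) (ψ j))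
    (hVherm : ∀ i j, i ≠ j → ∀ v ∈ Vs i, ∀ w ∈ Vs j, (inner ℂ v w : ℂ) = 0)
    (hWherm : ∀ i j, i ≠ j → ∀ v ∈ Ws i, ∀ w ∈ Ws j, (inner ℂ v w : ℂ) = 0) :
    ∃ h : r = s, (∀ i : Fin r, φ i = ψ (Fin.cast h i)) ∧
      (∀ i : Fin r, Vs i = Ws (Fin.cast h i)) := by
  have pi_pos := Real.pi_pos
  -- injectivity of cos² on [0, π/2]
  have cos_inj : ∀ a b : ℝ, 0 ≤ a → a ≤ Real.pi / 2 → 0 ≤ b → b ≤ Real.pi / 2 →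
      Real.cos a ^ 2 = Real.cos b ^ 2 → a = b := by
    intro a b ha1 ha2 hb1 hb2 hab
    have hca : 0 ≤ Real.cos a := Real.cos_nonneg_of_mem_Icc ⟨by linarith, ha2⟩
    have hcb : 0 ≤ Real.cos b := Real.cos_nonneg_of_mem_Icc ⟨by linarith, hb2⟩
    have hc : Real.cos a = Real.cos b := by nlinarith
    exact Real.injOn_cos ⟨ha1, by linarith⟩ ⟨hb1, by linarith⟩ hc
  -- cross-orthogonality between pieces with distinct angles
  have cross : ∀ i j, φ i ≠ ψ j → ∀ v ∈ Vs i, ∀ w ∈ Ws j, (inner ℝ v w : ℝ) = 0 := by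
    intro i j hne v hvv w hww
    have hwV : w ∈ V := hWsum ▸ Submodule.mem_iSup_of_mem j hww
    have hvV : v ∈ V := hVsum ▸ Submodule.mem_iSup_of_mem i hvv
    have h1 := key V Vs φ hVsum hVorth hVangle hVherm i hvv hwV
    have h2 := key V Ws ψ hWsum hWorth hWangle hWherm j hww hvV
    rw [real_inner_comm (Submodule.orthogonalProjectionOnto V (Jc v) : En n)
      (Submodule.orthogonalProjectionOnto V (Jc w) : En n), real_inner_comm v w] at h2
    have hcd : Real.cos (φ i) ^ 2 ≠ Real.cos (ψ j) ^ 2 := by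
      intro h
      exact hne (cos_inj _ _ (hφ i).1 (hφ i).2 (hψ j).1 (hψ j).2 h)
    have : (Real.cos (φ i) ^ 2 - Real.cos (ψ j) ^ 2) * (inner ℝ v w : ℝ) = 0 := by
      rw [sub_mul]
      rw [h1] at h2
      linarith [h2]
    rcases mul_eq_zero.1 this with h | h
    · exact absurd (by linarith : Real.cos (φ i) ^ 2 = Real.cos (ψ j) ^ 2) hcd
    · exact h
  -- each φ i is some ψ j, and conversely
  have hsub1 : ∀ i, ∃ j, φ i = ψ j := by
    intro i
    by_contra hcon
    push_neg at hcon
    obtain ⟨v, hv, hvne⟩ := Submodule.exists_mem_ne_zero_of_ne_bot (hVne i)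
    have hvV : v ∈ (⨆ j, Ws j : Submodule ℝ (En n)) := by
      rw [← hWsum, hVsum]
      exact Submodule.mem_iSup_of_mem i hv
    have : (inner ℝ v v : ℝ) = 0 :=
      inner_right_of_iSup (fun j w hw => cross i j (hcon j) v hv w hw) v hvV
    exact hvne (inner_self_eq_zero.1 this)
  have hsub2 : ∀ j, ∃ i, ψ j = φ i := by
    intro j
    by_contra hcon
    push_neg at hcon
    obtain ⟨w, hw, hwne⟩ := Submodule.exists_mem_ne_zero_of_ne_bot (hWne j)
    have hwV : w ∈ (⨆ i, Vs i : Submodule ℝ (En n)) := by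
      rw [← hVsum, hWsum]
      exact Submodule.mem_iSup_of_mem j hw
    have : (inner ℝ w w : ℝ) = 0 := by
      refine inner_right_of_iSup (fun i x hx => ?_) w hwV
      rw [real_inner_comm]
      exact cross i j (fun h => hcon i h.symm) x hx w hw
    exact hwne (inner_self_eq_zero.1 this)
  -- equal ranges, hence r = s and φ = ψ ∘ cast
  have hrange : Set.range φ = Set.range ψ := by
    ext x
    constructor
    · rintro ⟨i, rfl⟩
      obtain ⟨j, hj⟩ := hsub1 i
      exact ⟨j, hj.symm⟩
    · rintro ⟨j, rfl⟩
      obtain ⟨i, hi⟩ := hsub2 j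
      exact ⟨i, hi.symm⟩
  set T : Finset ℝ := Finset.image φ Finset.univ with hT
  have hTcard : T.card = r := by
    rw [hT, Finset.card_image_of_injective _ hφmono.injective, Finset.card_univ,
      Fintype.card_fin]
  have hT' : T = Finset.image ψ Finset.univ := by
    apply Finset.coe_injective
    rw [hT]
    simp only [Finset.coe_image, Finset.coe_univ, Set.image_univ]
    exact hrange
  have hTcard' : T.card = s := by
    rw [hT', Finset.card_image_of_injective _ hψmono.injective, Finset.card_univ,
      Fintype.card_fin]
  have hrs : r = s := by rw [← hTcard, hTcard']
  have hcastmono : StrictMono (fun i : Fin r => ψ (Fin.cast hrs i)) := by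
    intro a b hab
    exact hψmono hab
  have hφmem : ∀ i, φ i ∈ T := by
    intro i
    rw [hT]
    exact Finset.mem_image_of_mem φ (Finset.mem_univ i)
  have hψmem : ∀ i : Fin r, ψ (Fin.cast hrs i) ∈ T := by
    intro i
    rw [hT']
    exact Finset.mem_image_of_mem ψ (Finset.mem_univ _)
  have hφeq : ∀ i, φ i = ψ (Fin.cast hrs i) := by
    have e1 := Finset.orderEmbOfFin_unique hTcard hφmem hφmono
    have e2 := Finset.orderEmbOfFin_unique hTcard hψmem hcastmono
    intro i
    rw [e1]
    exact (congrFun e2 i).symm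
  refine ⟨hrs, hφeq, ?_⟩
  -- equality of subspaces
  intro i
  have hψinj := hψmono.injective
  have hφinj := hφmono.injective
  apply le_antisymm
  · intro v hv
    have hvW : v ∈ (⨆ j, Ws j : Submodule ℝ (En n)) := by
      rw [← hWsum]
      exact hVsum ▸ Submodule.mem_iSup_of_mem i hv
    refine mem_of_orth hWorth hvW ?_
    intro j hj w hw
    refine cross i j ?_ v hv w hw
    rw [hφeq i]
    exact fun h => hj (hψinj h).symm
  · intro w hw
    have hwV : w ∈ (⨆ l, Vs l : Submodule ℝ (En n)) := by
      rw [← hVsum]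
      exact hWsum ▸ Submodule.mem_iSup_of_mem _ hw
    refine mem_of_orth hVorth hwV ?_
    intro l hl x hx
    rw [real_inner_comm]
    refine cross l (Fin.cast hrs i) ?_ x hx w hw
    rw [← hφeq i]
    exact fun h => hl (hφinj h)
end
end

section
/- Let V be a real subspace of ℂ^n and let P : V → V be the real-linear endomorphism P v = π_V(Jv). If v, w ∈ V are eigenvectors of −P² for distinct eigenvalues (i.e. −P²v = c·v, −P²w = c'·w with c ≠ c'), then the Hermitian inner product ⟪v, w⟫ vanishes; in particular ⟨v, w⟩ = 0, ⟨Jv, w⟩ = 0, and ⟨Jv, Jw⟩ = 0. -/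
noncomputable section

/-- Eigenvectors of `-P² = -(π_V ∘ J)²` for distinct eigenvalues are
Hermitian-orthogonal; in particular they are orthogonal for the real inner
product, and so are their images under `J`. -/
theorem hermitian_orthogonality_of_distinct_eigenvalues (n : ℕ)
    (V : Submodule ℝ (En n))
    (P : V →ₗ[ℝ] V) (hP : ∀ u : V, P u = V.orthogonalProjection (Jc (u : En n)))
    (v w : V) (c c' : ℝ) (hc : c ≠ c')
    (hv : (-(P ∘ₗ P)) v = c • v) (hw : (-(P ∘ₗ P)) w = c' • w) :
    (inner ℂ (v : En n) (w : En n) : ℂ) = 0 ∧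
    (inner ℝ (v : En n) (w : En n) : ℝ) = 0 ∧
    (inner ℝ (Jc (v : En n)) (w : En n) : ℝ) = 0 ∧
    (inner ℝ (Jc (v : En n)) (Jc (w : En n)) : ℝ) = 0 := by
  letI : InnerProductSpace ℝ (En n) := inferInstance
  letI : InnerProductSpace ℝ V := inferInstance
  -- real inner is real part of complex inner
  have hre : ∀ x y : En n, (inner ℝ x y : ℝ) = Complex.re (inner ℂ x y : ℂ) := by
    intro x y; simp [PiLp.inner_apply, map_sum]
  -- projection preserves inner against members of V
  have hproj : ∀ (x : En n) (u : V),
      (inner ℝ ((V.orthogonalProjection x : V) : En n) (u : En n) : ℝ)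
        = inner ℝ x (u : En n) := by
    intro x u
    have h := Submodule.sub_starProjection_mem_orthogonal (K := V) x
    have h0 : (inner ℝ (x - ((V.orthogonalProjection x : V) : En n)) (u : En n) : ℝ) = 0 :=
      (Submodule.mem_orthogonal' V _).1 h _ u.2
    rw [inner_sub_left] at h0
    linarith
  -- J is skew for the real inner product
  have hJ : ∀ x y : En n, (inner ℝ (Jc x) y : ℝ) = - (inner ℝ x (Jc y) : ℝ) := by
    intro x y
    rw [hre, hre]
    simp [Jc, inner_smul_left, inner_smul_right]
  -- P is skew-adjoint on V
  have hskew : ∀ u z : V, (inner ℝ (P u) z : ℝ) = - (inner ℝ u (P z) : ℝ) := by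
    intro u z
    rw [Submodule.coe_inner, Submodule.coe_inner, hP u, hP z, hproj, hJ]
    have : (inner ℝ ((u : En n)) ((V.orthogonalProjection (Jc (z : En n)) : V) : En n) : ℝ)
        = inner ℝ (u : En n) (Jc (z : En n)) := by
      rw [real_inner_comm, hproj, real_inner_comm]
    rw [this]
  -- A := -(P ∘ₗ P) is symmetric
  set A : V →ₗ[ℝ] V := -(P ∘ₗ P) with hA
  have hsym : ∀ u z : V, (inner ℝ (A u) z : ℝ) = inner ℝ u (A z) := by
    intro u z
    have h1 : A u = -(P (P u)) := rfl
    have h2 : A z = -(P (P z)) := rfl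
    rw [h1, h2, inner_neg_left (𝕜 := ℝ), inner_neg_right (𝕜 := ℝ),
      hskew (P u) z, hskew u (P z)]
    ring
  -- eigenvectors of A for distinct eigenvalues are orthogonal
  have ortho : ∀ (x y : V) (cx cy : ℝ), A x = cx • x → A y = cy • y → cx ≠ cy →
      (inner ℝ x y : ℝ) = 0 := by
    intro x y cx cy hx hy hne
    have : cx * (inner ℝ x y : ℝ) = cy * (inner ℝ x y : ℝ) := by
      calc cx * (inner ℝ x y : ℝ) = inner ℝ (cx • x) y := (real_inner_smul_left _ _ _).symm
        _ = inner ℝ (A x) y := by rw [hx]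
        _ = inner ℝ x (A y) := hsym x y
        _ = inner ℝ x (cy • y) := by rw [hy]
        _ = cy * (inner ℝ x y : ℝ) := real_inner_smul_right x y cy
    have hsub : (cx - cy) * (inner ℝ x y : ℝ) = 0 := by ring_nf; linarith
    rcases mul_eq_zero.1 hsub with h | h
    · exact absurd (sub_eq_zero.1 h) hne
    · exact h
  -- real orthogonality of v and w
  have h1 : (inner ℝ (v : En n) (w : En n) : ℝ) = 0 := by
    rw [← Submodule.coe_inner]; exact ortho v w c c' hv hw hc
  -- P v is an eigenvector of A for c
  have hPv : A (P v) = c • P v := by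
    have : A (P v) = P (A v) := by
      simp only [hA, LinearMap.neg_apply, LinearMap.comp_apply, map_neg]
    rw [this, hv, map_smul]
  -- ⟪Jv, w⟫_ℝ = ⟪P v, w⟫_ℝ = 0
  have h2 : (inner ℝ (Jc (v : En n)) (w : En n) : ℝ) = 0 := by
    have hPvw : (inner ℝ (P v) w : ℝ) = 0 := ortho (P v) w c c' hPv hw hc
    rw [Submodule.coe_inner, hP v, hproj] at hPvw
    exact hPvw
  -- ⟪Jv, Jw⟫_ℝ = ⟪v, w⟫_ℝ = 0
  have h3 : (inner ℝ (Jc (v : En n)) (Jc (w : En n)) : ℝ) = 0 := by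
    rw [hre] at h1 ⊢
    have : (inner ℂ (Jc (v : En n)) (Jc (w : En n)) : ℂ) = inner ℂ (v : En n) (w : En n) := by
      simp [Jc, inner_smul_left, inner_smul_right]
      ring_nf
      simp [Complex.ext_iff]
    rw [this]; exact h1
  -- complex inner vanishes
  have hcomplex : (inner ℂ (v : En n) (w : En n) : ℂ) = 0 := by
    have him : Complex.im (inner ℂ (v : En n) (w : En n) : ℂ) = 0 := by
      have : (inner ℂ (Jc (v : En n)) (w : En n) : ℂ)
          = -Complex.I * inner ℂ (v : En n) (w : En n) := by
        simp [Jc, inner_smul_left]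
        ring
      rw [hre, this] at h2
      simpa using h2
    have hre' : Complex.re (inner ℂ (v : En n) (w : En n) : ℂ) = 0 := by
      rw [hre] at h1; exact h1
    exact Complex.ext hre' him
  exact ⟨hcomplex, h1, h2, h3⟩
end
end

section
/- Let V be a real subspace of ℂ^n of constant Kähler angle φ with φ ∈ (0, π/2]. Then the orthogonal complement of V inside its complex span, W = ℂV ⊖ V (taken with respect to the real inner product), has the same real dimension as V and also has constant Kähler angle φ. -/
noncomputable section

/-- The complex span of a real subspace of `ℂ^n`, viewed as a real subspace. -/
def CSpan {n : ℕ} (V : Submodule ℝ (En n)) : Submodule ℝ (En n) :=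
  (Submodule.span ℂ (V : Set (En n))).restrictScalars ℝ

/-! ### Auxiliary material -/

/-- `J` as an `ℝ`-linear map. -/
def Jlin (n : ℕ) : En n →ₗ[ℝ] En n where
  toFun := Jc
  map_add' x y := by simp [Jc, smul_add]
  map_smul' r x := (smul_comm r Complex.I x).symm

@[simp] lemma Jlin_apply {n : ℕ} (x : En n) : Jlin n x = Jc x := rfl

lemma norm_Jc {n : ℕ} (x : En n) : ‖Jc x‖ = ‖x‖ := by
  simp [Jc, norm_smul]

lemma Jc_Jc {n : ℕ} (x : En n) : Jc (Jc x) = -x := by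
  simp [Jc, smul_smul, Complex.I_mul_I, neg_smul]

lemma Jc_sub {n : ℕ} (x y : En n) : Jc (x - y) = Jc x - Jc y := by
  simp [Jc, smul_sub]

lemma mem_cspan_of_mem {n : ℕ} {V : Submodule ℝ (En n)} {x : En n} (hx : x ∈ V) :
    x ∈ CSpan V := Submodule.subset_span hx

lemma Jc_mem_cspan {n : ℕ} {V : Submodule ℝ (En n)} {x : En n} (hx : x ∈ CSpan V) :
    Jc x ∈ CSpan V := by
  exact Submodule.smul_mem (Submodule.span ℂ (V : Set (En n))) Complex.I hx

/-- The complex span of `V` is contained in `V + J V` (as real subspaces). -/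
lemma cspan_le_sup {n : ℕ} (V : Submodule ℝ (En n)) :
    CSpan V ≤ V ⊔ V.map (Jlin n) := by
  intro x hx
  have hx' : x ∈ Submodule.span ℂ (V : Set (En n)) := hx
  set T : Submodule ℝ (En n) := V ⊔ V.map (Jlin n) with hT
  have hJT : ∀ y ∈ T, Jc y ∈ T := by
    intro y hy
    rcases Submodule.mem_sup.1 hy with ⟨a, ha, b, hb, rfl⟩
    rcases Submodule.mem_map.1 hb with ⟨c, hc, rfl⟩
    have : Jc (a + Jlin n c) = Jc a + (-c) := by
      simp only [Jlin_apply]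
      rw [show Jc (a + Jc c) = Jc a + Jc (Jc c) from by simp [Jc, smul_add], Jc_Jc]
    rw [this]
    exact Submodule.add_mem _
      (Submodule.mem_sup_right (Submodule.mem_map_of_mem ha))
      (Submodule.mem_sup_left (neg_mem hc))
  refine Submodule.span_induction (p := fun y _ => y ∈ T) ?_ ?_ ?_ ?_ hx'
  · intro y hy; exact Submodule.mem_sup_left hy
  · exact zero_mem T
  · intro a b _ _ ha hb; exact add_mem ha hb
  · intro c y _ hy
    have hdecomp : c • y = c.re • y + c.im • Jc y := by
      conv_lhs => rw [← Complex.re_add_im c]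
      rw [add_smul, mul_smul, Complex.coe_smul, Complex.coe_smul]
      rfl
    rw [hdecomp]
    exact add_mem (Submodule.smul_mem _ _ hy) (Submodule.smul_mem _ _ (hJT y hy))

/-- The map `v ↦ J v - π_V (J v)` as a linear map from `V` to `ℂⁿ`. -/
def Fmap {n : ℕ} (V : Submodule ℝ (En n)) : V →ₗ[ℝ] En n :=
  (Jlin n ∘ₗ V.subtype) -
    (V.subtype ∘ₗ (Submodule.orthogonalProjectionOnto V).toLinearMap ∘ₗ Jlin n ∘ₗ V.subtype)

lemma Fmap_apply {n : ℕ} (V : Submodule ℝ (En n)) (v : V) :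
    Fmap V v = Jc (v : En n) - (Submodule.orthogonalProjectionOnto V (Jc (v : En n)) : En n) := rfl

lemma Fmap_mem_orthogonal {n : ℕ} (V : Submodule ℝ (En n)) (v : V) :
    Fmap V v ∈ Vᗮ := by
  rw [Fmap_apply]
  exact Submodule.sub_starProjection_mem_orthogonal _

lemma Fmap_mem {n : ℕ} (V : Submodule ℝ (En n)) (v : V) :
    Fmap V v ∈ CSpan V ⊓ Vᗮ := by
  refine ⟨?_, Fmap_mem_orthogonal V v⟩
  rw [Fmap_apply]
  exact Submodule.sub_mem _ (Jc_mem_cspan (mem_cspan_of_mem v.2))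
    (mem_cspan_of_mem (Submodule.orthogonalProjectionOnto V (Jc (v : En n))).2)

lemma Fmap_norm_sq {n : ℕ} (V : Submodule ℝ (En n)) {φ : ℝ}
    (hV : HasConstKahlerAngle V φ) (v : V) :
    ‖Fmap V v‖ ^ 2 = Real.sin φ ^ 2 * ‖(v : En n)‖ ^ 2 := by
  have hpyth := Submodule.norm_sq_eq_add_norm_sq_projection (Jc (v : En n)) V
  have hval : (Submodule.orthogonalProjectionOnto Vᗮ (Jc (v : En n)) : En n)
      = Jc (v : En n) - (Submodule.orthogonalProjectionOnto V (Jc (v : En n)) : En n) :=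
    Submodule.starProjection_orthogonal_val _
  have hnormJ : ‖Jc (v : En n)‖ = ‖(v : En n)‖ := norm_Jc _
  have hcos := hV (v : En n) v.2
  have h1 : ‖(Submodule.orthogonalProjectionOnto Vᗮ (Jc (v : En n)) : En n)‖ ^ 2
      = ‖(v : En n)‖ ^ 2 - Real.cos φ ^ 2 * ‖(v : En n)‖ ^ 2 := by
    have h2 : ‖(v : En n)‖ ^ 2 = ‖(Submodule.orthogonalProjectionOnto V (Jc (v : En n)) : En n)‖ ^ 2
        + ‖(Submodule.orthogonalProjectionOnto Vᗮ (Jc (v : En n)) : En n)‖ ^ 2 := by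
      rw [← hnormJ]
      simpa [Submodule.coe_norm] using hpyth
    rw [hcos] at h2
    linarith
  rw [Fmap_apply, ← hval, h1]
  have := Real.sin_sq_add_cos_sq φ
  nlinarith

/-- If `V` has constant Kähler angle `φ ∈ (0, π/2]`, then `ℂV ⊖ V`, the real
orthogonal complement of `V` in its complex span, has the same real dimension
as `V` and constant Kähler angle `φ`. -/
theorem cspan_ominus_constKahlerAngle (n : ℕ) (V : Submodule ℝ (En n))
    (φ : ℝ) (hφ0 : 0 < φ) (hφ1 : φ ≤ Real.pi / 2)
    (hV : HasConstKahlerAngle V φ) :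
    Module.finrank ℝ (CSpan V ⊓ Vᗮ : Submodule ℝ (En n)) = Module.finrank ℝ V ∧
    HasConstKahlerAngle (CSpan V ⊓ Vᗮ) φ := by
  set W : Submodule ℝ (En n) := CSpan V ⊓ Vᗮ with hW
  have hsin : 0 < Real.sin φ :=
    Real.sin_pos_of_pos_of_lt_pi hφ0 (lt_of_le_of_lt hφ1 (by linarith [Real.pi_pos]))
  -- injectivity of Fmap
  have hinj : Function.Injective (Fmap V) := by
    rw [← LinearMap.ker_eq_bot, Submodule.eq_bot_iff]
    intro v hv
    have h0 : ‖Fmap V v‖ ^ 2 = 0 := by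
      rw [LinearMap.mem_ker.1 hv]; simp
    rw [Fmap_norm_sq V hV v] at h0
    have hs2 : (0:ℝ) < Real.sin φ ^ 2 := by positivity
    have hsq : ‖(v : En n)‖ ^ 2 = 0 := by nlinarith [sq_nonneg ‖(v : En n)‖]
    have : ‖(v : En n)‖ = 0 := pow_eq_zero_iff two_ne_zero |>.mp hsq
    exact Subtype.ext (norm_eq_zero.1 this)
  -- surjectivity onto W
  have hsurj : ∀ w ∈ W, ∃ v : V, Fmap V v = w := by
    intro w hw
    obtain ⟨hw1, hw2⟩ := hw
    rcases Submodule.mem_sup.1 (cspan_le_sup V hw1) with ⟨a, ha, b, hb, rfl⟩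
    rcases Submodule.mem_map.1 hb with ⟨c, hc, rfl⟩
    refine ⟨⟨c, hc⟩, ?_⟩
    have hdiff : a + Jlin n c - Fmap V ⟨c, hc⟩ ∈ V := by
      rw [Fmap_apply]
      have : a + Jlin n c - (Jc c - (Submodule.orthogonalProjectionOnto V (Jc c) : En n))
          = a + (Submodule.orthogonalProjectionOnto V (Jc c) : En n) := by
        simp only [Jlin_apply]; abel
      rw [this]
      exact Submodule.add_mem _ ha (Submodule.orthogonalProjectionOnto V (Jc c)).2
    have hdiff' : a + Jlin n c - Fmap V ⟨c, hc⟩ ∈ Vᗮ :=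
      Submodule.sub_mem _ hw2 (Fmap_mem_orthogonal V ⟨c, hc⟩)
    have : a + Jlin n c - Fmap V ⟨c, hc⟩ = 0 := by
      have := Submodule.orthogonal_disjoint V
      exact Submodule.disjoint_def.1 this _ hdiff hdiff'
    exact (sub_eq_zero.mp this).symm
  -- the bijection between V and W
  set G : V →ₗ[ℝ] W := (Fmap V).codRestrict W (Fmap_mem V) with hG
  have hGbij : Function.Bijective G := by
    constructor
    · intro a b hab
      apply hinj
      have := congrArg (Subtype.val) hab
      simpa [hG, LinearMap.codRestrict] using this
    · intro w
      obtain ⟨v, hv⟩ := hsurj (w : En n) w.2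
      exact ⟨v, Subtype.ext (by simpa [hG, LinearMap.codRestrict] using hv)⟩
  constructor
  · exact ((LinearEquiv.ofBijective G hGbij).finrank_eq).symm
  · -- the Kähler angle of W
    intro w hw
    obtain ⟨v, hv⟩ := hsurj w hw
    set p : V := Submodule.orthogonalProjectionOnto V (Jc (v : En n)) with hp
    have hwJc : Jc w = (-(v : En n) - Jc (p : En n)) := by
      rw [← hv, Fmap_apply, Jc_sub, Jc_Jc]
    -- V is contained in Wᗮ
    have hVW : ∀ x ∈ V, x ∈ Wᗮ := by
      intro x hx
      rw [Submodule.mem_orthogonal]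
      intro y hy
      exact (Submodule.mem_orthogonal' V y).1 hy.2 x hx
    have hproj : (Submodule.orthogonalProjectionOnto W (Jc w) : En n) = -(Fmap V p) := by
      refine Submodule.eq_starProjection_of_mem_orthogonal (neg_mem (Fmap_mem V p)) ?_
      have heq : Jc w - -(Fmap V p)
          = -((v : En n) + (Submodule.orthogonalProjectionOnto V (Jc (p : En n)) : En n)) := by
        rw [hwJc, Fmap_apply]
        abel
      rw [heq]
      exact neg_mem (hVW _ (V.add_mem v.2 (Submodule.orthogonalProjectionOnto V (Jc (p : En n))).2))
    rw [hproj, norm_neg]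
    have h1 := Fmap_norm_sq V hV p
    have h2 : ‖(p : En n)‖ ^ 2 = Real.cos φ ^ 2 * ‖(v : En n)‖ ^ 2 := hV (v : En n) v.2
    have h3 : ‖w‖ ^ 2 = Real.sin φ ^ 2 * ‖(v : En n)‖ ^ 2 := by
      rw [← hv]; exact Fmap_norm_sq V hV v
    rw [h1, h2, h3]
    ring
end
end

section
/- Let V be a totally real subspace of ℂ^n, i.e. ⟨Jv, w⟩ = 0 for all v, w ∈ V, and let B : V → V be a surjective real-linear isometry of V. Then there exists a complex-linear isometric automorphism A of ℂ^n such that A(V) = V and A v = B v for every v ∈ V. -/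
noncomputable section

set_option maxHeartbeats 8000000 in
/-- Every surjective real-linear isometry of a totally real subspace `V` of `ℂ^n`
extends to a unitary transformation of `ℂ^n` preserving `V`. -/
theorem extend_orthogonal_of_totally_real (n : ℕ) (V : Submodule ℝ (En n))
    (hV : ∀ v ∈ V, ∀ w ∈ V, (inner ℝ (Jc v) w : ℝ) = 0)
    (B : V →ₗ[ℝ] V)
    (hBsurj : Function.Surjective B)
    (hBiso : ∀ v : V, ‖B v‖ = ‖v‖) :
    ∃ A : En n ≃ₗᵢ[ℂ] En n,
      ⇑A '' (V : Set (En n)) = (V : Set (En n)) ∧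
      ∀ v : V, A (v : En n) = (B v : En n) := by
  classical
  have hre : ∀ x y : En n, (inner ℝ x y : ℝ) = Complex.re (inner ℂ x y : ℂ) := by
    intro x y
    simp [PiLp.inner_apply, real_inner_eq_re_inner ℂ, map_sum]
  have hreal : ∀ x ∈ V, ∀ y ∈ V, (inner ℂ x y : ℂ) = ((inner ℝ x y : ℝ) : ℂ) := by
    intro x hx y hy
    have h2 : Complex.im (inner ℂ x y : ℂ) = 0 := by
      have h0 := hV x hx y hy
      rw [hre] at h0
      rw [Jc, inner_smul_left] at h0
      simpa using h0
    apply Complex.ext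
    · rw [Complex.ofReal_re]; exact (hre x y).symm
    · rw [Complex.ofReal_im]; exact h2
  have : FiniteDimensional ℝ (En n) := by infer_instance
  set m := Module.finrank ℝ V with hm
  let b := stdOrthonormalBasis ℝ V
  let Bi : V →ₗᵢ[ℝ] V := ⟨B, hBiso⟩
  let v : Fin m → En n := fun i => (b i : En n)
  let w : Fin m → En n := fun i => (B (b i) : En n)
  have hv_mem : ∀ i, v i ∈ V := fun i => (b i).2
  have hw_mem : ∀ i, w i ∈ V := fun i => (B (b i)).2
  have hvR : Orthonormal ℝ v := b.orthonormal.comp_linearIsometry V.subtypeₗᵢ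
  have hwR : Orthonormal ℝ w :=
    b.orthonormal.comp_linearIsometry (V.subtypeₗᵢ.comp Bi)
  have key : ∀ (p : Fin m → En n), (∀ i, p i ∈ V) → Orthonormal ℝ p → Orthonormal ℂ p := by
    intro p hp hON
    rw [orthonormal_iff_ite] at hON ⊢
    intro i j
    rw [hreal _ (hp i) _ (hp j), hON i j]
    split <;> simp
  have hvC : Orthonormal ℂ v := key v hv_mem hvR
  have hwC : Orthonormal ℂ w := key w hw_mem hwR
  -- real spans
  have hsv : Submodule.span ℝ (Set.range v) = V := by
    have h1 : Set.range v = V.subtype '' Set.range b := by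
      ext x; simp [v]; exact Iff.rfl
    rw [h1, ← Submodule.map_span, ← b.coe_toBasis, b.toBasis.span_eq,
      Submodule.map_subtype_top]
  have hsw : Submodule.span ℝ (Set.range w) = V := by
    have h1 : Set.range w = V.subtype '' Set.range (fun i => B (b i)) := by
      ext x; simp [w]; exact Iff.rfl
    have h2 : Set.range (fun i => B (b i)) = B '' Set.range b := by
      ext x; simp
    have h3 : Submodule.span ℝ (Set.range (fun i => B (b i))) = ⊤ := by
      rw [h2, ← Submodule.map_span, ← b.coe_toBasis, b.toBasis.span_eq,
        Submodule.map_top, LinearMap.range_eq_top.2 hBsurj]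
    rw [h1, ← Submodule.map_span, h3, Submodule.map_subtype_top]
  -- complex span
  set W : Submodule ℂ (En n) := Submodule.span ℂ (Set.range v) with hW
  have hWV : W = Submodule.span ℂ (V : Set (En n)) := by
    rw [hW, ← hsv, Submodule.span_span_of_tower]
  have hWw : Submodule.span ℂ (Set.range w) = W := by
    rw [hWV, ← hsw, Submodule.span_span_of_tower]
  have hvW : ∀ i, v i ∈ W := fun i => Submodule.subset_span (Set.mem_range_self i)
  have hwW : ∀ i, w i ∈ W := fun i => by
    rw [← hWw]; exact Submodule.subset_span (Set.mem_range_self i)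
  -- orthogonal complement
  set k := Module.finrank ℂ Wᗮ with hk
  let d := stdOrthonormalBasis ℂ Wᗮ
  let u : Fin k → En n := fun j => (d j : En n)
  have huC : Orthonormal ℂ u := d.orthonormal.comp_linearIsometry Wᗮ.subtypeₗᵢ
  have hsu : Submodule.span ℂ (Set.range u) = Wᗮ := by
    have h1 : Set.range u = Wᗮ.subtype '' Set.range d := by
      ext x; simp [u]; exact Iff.rfl
    rw [h1, ← Submodule.map_span, ← d.coe_toBasis, d.toBasis.span_eq,
      Submodule.map_subtype_top]
  -- combined orthonormal families
  have hONsum : ∀ (p : Fin m → En n), Orthonormal ℂ p → (∀ i, p i ∈ W) →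
      Orthonormal ℂ (Sum.elim p u) := by
    intro p hp hmem
    rw [orthonormal_iff_ite] at hp huC ⊢
    rintro (i | i) (j | j)
    · simpa using hp i j
    · simpa using Submodule.inner_right_of_mem_orthogonal (hmem i) (d j).2
    · simpa using Submodule.inner_left_of_mem_orthogonal (hmem j) (d i).2
    · simpa using huC i j
  have hONspan : ∀ (p : Fin m → En n), Submodule.span ℂ (Set.range p) = W →
      ⊤ ≤ Submodule.span ℂ (Set.range (Sum.elim p u)) := by
    intro p hp
    rw [Set.Sum.elim_range, Submodule.span_union, hp, hsu,
      Submodule.sup_orthogonal_of_hasOrthogonalProjection]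
  let B1 := OrthonormalBasis.mk (hONsum v hvC hvW) (hONspan v rfl)
  let B2 := OrthonormalBasis.mk (hONsum w hwC hwW) (hONspan w hWw)
  let A : En n ≃ₗᵢ[ℂ] En n := B1.repr.trans B2.repr.symm
  have hA : ∀ i, A (Sum.elim v u i) = Sum.elim w u i := by
    intro i
    have h1 : Sum.elim v u i = B1 i := (congrFun (OrthonormalBasis.coe_mk _ _) i).symm
    have h2 : B2 i = Sum.elim w u i := congrFun (OrthonormalBasis.coe_mk _ _) i
    rw [h1, ← h2]
    show B2.repr.symm (B1.repr (B1 i)) = B2 i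
    rw [B1.repr_self, B2.repr_symm_single]
  have hAv : ∀ x : V, A (x : En n) = (B x : En n) := by
    let L1 : V →ₗ[ℝ] En n :=
      ((A.toLinearEquiv.restrictScalars ℝ).toLinearMap).comp V.subtype
    let L2 : V →ₗ[ℝ] En n := V.subtype.comp B
    have hL : L1 = L2 := by
      apply b.toBasis.ext
      intro i
      have : A (v i) = w i := hA (Sum.inl i)
      simpa [L1, L2, v, w] using this
    intro x
    exact LinearMap.congr_fun hL x
  refine ⟨A, ?_, hAv⟩
  apply Set.Subset.antisymm
  · rintro - ⟨x, hx, rfl⟩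
    rw [hAv ⟨x, hx⟩]
    exact (B ⟨x, hx⟩).2
  · intro y hy
    obtain ⟨x, hx⟩ := hBsurj ⟨y, hy⟩
    refine ⟨x, x.2, ?_⟩
    rw [hAv x, hx]
end
end

section
/- Let φ ∈ [0, π/2), let n ≥ 1, and let {e_1, …, e_n} and {f_1, …, f_n} be two ℂ-orthonormal bases of ℂ^n. In ℂ^{2n} = ℂ^n ⊕ ℂ^n (with the direct-sum Hermitian inner product and J acting componentwise as multiplication by i), the real span V_φ of the 2n vectors (cos(φ/2)·e_k, sin(φ/2)·J f_k) and (cos(φ/2)·J e_k, sin(φ/2)·f_k), for k = 1, …, n, is a real subspace of real dimension 2n with constant Kähler angle φ. -/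
noncomputable section

/-- `ℂ^{2n} = ℂ^n ⊕ ℂ^n` with the direct-sum Hermitian inner product. -/
abbrev E2n (n : ℕ) : Type := WithLp 2 (En n × En n)

/-- The complex structure `J` on `ℂ^n ⊕ ℂ^n`, multiplication by `i`
(acting componentwise). -/
def Jc2 {n : ℕ} (x : E2n n) : E2n n := Complex.I • x

/-- Constant Kähler angle for real subspaces of `ℂ^n ⊕ ℂ^n`. -/
def HasConstKahlerAngle2 {n : ℕ} (V : Submodule ℝ (E2n n)) (φ : ℝ) : Prop :=
  ∀ v ∈ V, ‖(Submodule.orthogonalProjection V (Jc2 v) : E2n n)‖ ^ 2 = Real.cos φ ^ 2 * ‖v‖ ^ 2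

namespace KA

variable {n : ℕ}

lemma insl (r : ℝ) (x y : En n) : (inner ℂ (r • x) y : ℂ) = r * inner ℂ x y := by
  rw [RCLike.real_smul_eq_coe_smul (K := ℂ), inner_smul_left, RCLike.conj_ofReal]; rfl

lemma insr (r : ℝ) (x y : En n) : (inner ℂ x (r • y) : ℂ) = r * inner ℂ x y := by
  rw [RCLike.real_smul_eq_coe_smul (K := ℂ), inner_smul_right]; rfl

lemma inJl (x y : En n) : (inner ℂ (Jc x) y : ℂ) = -Complex.I * inner ℂ x y := by
  simp [Jc, inner_smul_left, mul_comm]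

lemma inJr (x y : En n) : (inner ℂ x (Jc y) : ℂ) = Complex.I * inner ℂ x y := by
  simp [Jc, inner_smul_right]

lemma rinner_pair (a b a' b' : En n) :
    (inner ℝ (((WithLp.equiv 2 (En n × En n)).symm (a, b)) : E2n n)
      ((WithLp.equiv 2 (En n × En n)).symm (a', b')) : ℝ)
    = (inner ℂ a a' : ℂ).re + (inner ℂ b b' : ℂ).re := by
  simp [WithLp.prod_inner_apply, PiLp.inner_apply, Complex.inner, RCLike.inner_apply,
    Complex.add_re, Complex.re_sum]

lemma symm_smul (r : ℝ) (a b : En n) :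
    r • (((WithLp.equiv 2 (En n × En n)).symm (a, b)) : E2n n)
      = (WithLp.equiv 2 (En n × En n)).symm (r • a, r • b) := rfl

lemma symm_add (a b a' b' : En n) :
    (((WithLp.equiv 2 (En n × En n)).symm (a, b)) : E2n n)
        + (WithLp.equiv 2 (En n × En n)).symm (a', b')
      = (WithLp.equiv 2 (En n × En n)).symm (a + a', b + b') := rfl

lemma Jc2_pair (a b : En n) :
    Jc2 (((WithLp.equiv 2 (En n × En n)).symm (a, b)) : E2n n)
      = (WithLp.equiv 2 (En n × En n)).symm (Complex.I • a, Complex.I • b) := rfl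

lemma Jc2_smul (r : ℝ) (x : E2n n) : Jc2 (r • x) = r • Jc2 x :=
  smul_comm Complex.I r x

lemma Jc2_sum {ι : Type*} (s : Finset ι) (f : ι → E2n n) :
    Jc2 (∑ i ∈ s, f i) = ∑ i ∈ s, Jc2 (f i) := by
  simp [Jc2, Finset.smul_sum]

lemma main (e f : Fin n → En n) (he : Orthonormal ℂ e) (hf : Orthonormal ℂ f)
    (c s φ : ℝ) (hcs : c ^ 2 + s ^ 2 = 1) (hco : Real.cos φ = c ^ 2 - s ^ 2)
    (u w : Fin n → E2n n)
    (hu : ∀ k, u k = (WithLp.equiv 2 (En n × En n)).symm (c • e k, s • Jc (f k)))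
    (hw : ∀ k, w k = (WithLp.equiv 2 (En n × En n)).symm (c • Jc (e k), s • f k)) :
    Module.finrank ℝ (Submodule.span ℝ (Set.range u ∪ Set.range w)) = 2 * n ∧
    HasConstKahlerAngle2 (Submodule.span ℝ (Set.range u ∪ Set.range w)) φ := by
  classical
  have hee := orthonormal_iff_ite.mp he
  have hff := orthonormal_iff_ite.mp hf
  have hcoC : Complex.cos (φ : ℂ) = (c : ℂ) ^ 2 - (s : ℂ) ^ 2 := by
    rw [← Complex.ofReal_cos]; exact_mod_cast hco
  have hcsC : (c : ℂ) ^ 2 + (s : ℂ) ^ 2 = 1 := by exact_mod_cast hcs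
  set g : Fin n ⊕ Fin n → E2n n := Sum.elim u w with hgdef
  have hrange : Set.range u ∪ Set.range w = Set.range g := (Set.Sum.elim_range u w).symm
  set V : Submodule ℝ (E2n n) := Submodule.span ℝ (Set.range u ∪ Set.range w) with hVdef
  -- orthonormality
  have hg : Orthonormal ℝ g := by
    rw [orthonormal_iff_ite]
    rintro (k | k) (l | l) <;>
      simp only [hgdef, Sum.elim_inl, Sum.elim_inr, hu, hw, rinner_pair, insl, insr, inJl, inJr,
        hee k l, hff k l, Sum.inl.injEq, Sum.inr.injEq, reduceCtorEq, if_false] <;>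
      split_ifs <;> simp_all <;> nlinarith [hcs]
  -- the orthogonal residues
  set q : Fin n → E2n n := fun k => (WithLp.equiv 2 (En n × En n)).symm
    ((2 * c * s ^ 2) • Jc (e k), (-(2 * s * c ^ 2)) • f k) with hqdef
  set q' : Fin n → E2n n := fun k => (WithLp.equiv 2 (En n × En n)).symm
    ((-(2 * c * s ^ 2)) • e k, (2 * s * c ^ 2) • Jc (f k)) with hq'def
  have hJu : ∀ k, Jc2 (u k) = Real.cos φ • w k + q k := by
    intro k
    rw [hu, hw, Jc2_pair, hqdef, symm_smul, symm_add]
    congr 1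
    rw [Prod.ext_iff]
    constructor
    · simp only [Jc]
      match_scalars
      push_cast [Complex.coe_algebraMap]
      linear_combination (-(Complex.I * (c : ℂ))) * hcoC + (-(Complex.I * (c : ℂ))) * hcsC
    · simp only [Jc]
      match_scalars
      push_cast [Complex.coe_algebraMap]
      linear_combination (-(s : ℂ)) * hcoC + ((s : ℂ)) * hcsC + (s : ℂ) * Complex.I_sq
  have hJw : ∀ k, Jc2 (w k) = (-Real.cos φ) • u k + q' k := by
    intro k
    rw [hu, hw, Jc2_pair, hq'def, symm_smul, symm_add]
    congr 1
    rw [Prod.ext_iff]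
    constructor
    · simp only [Jc]
      match_scalars
      push_cast [Complex.coe_algebraMap]
      linear_combination ((c : ℂ)) * hcoC + ((c : ℂ)) * hcsC + (c : ℂ) * Complex.I_sq
    · simp only [Jc]
      match_scalars
      push_cast [Complex.coe_algebraMap]
      linear_combination (Complex.I * (s : ℂ)) * hcoC + (-(Complex.I * (s : ℂ))) * hcsC
  -- residues are orthogonal to V
  have hqV : ∀ k, ∀ x ∈ V, (inner ℝ (q k) x : ℝ) = 0 := by
    intro k x hx
    induction hx using Submodule.span_induction with
    | mem x hx =>
        rcases hx with ⟨l, rfl⟩ | ⟨l, rfl⟩ <;>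
          simp only [hqdef, hu, hw, rinner_pair, insl, insr, inJl, inJr, hee k l, hff k l] <;>
          split_ifs <;>
          simp [Complex.mul_re, Complex.I_re, Complex.I_im, ← Complex.ofReal_pow] <;> ring
    | zero => simp
    | add x y _ _ hx hy => rw [inner_add_right, hx, hy, add_zero]
    | smul r x _ hx => rw [real_inner_smul_right, hx, mul_zero]
  have hq'V : ∀ k, ∀ x ∈ V, (inner ℝ (q' k) x : ℝ) = 0 := by
    intro k x hx
    induction hx using Submodule.span_induction with
    | mem x hx =>
        rcases hx with ⟨l, rfl⟩ | ⟨l, rfl⟩ <;>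
          simp only [hq'def, hu, hw, rinner_pair, insl, insr, inJl, inJr, hee k l, hff k l] <;>
          split_ifs <;>
          simp [Complex.mul_re, Complex.I_re, Complex.I_im, ← Complex.ofReal_pow] <;> ring
    | zero => simp
    | add x y _ _ hx hy => rw [inner_add_right, hx, hy, add_zero]
    | smul r x _ hx => rw [real_inner_smul_right, hx, mul_zero]
  -- projections of J of generators
  have hwV : ∀ k, w k ∈ V := fun k =>
    Submodule.subset_span (Set.mem_union_right _ ⟨k, rfl⟩)
  have huV : ∀ k, u k ∈ V := fun k =>
    Submodule.subset_span (Set.mem_union_left _ ⟨k, rfl⟩)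
  have hPu : ∀ k, ((Submodule.orthogonalProjection V (Jc2 (u k)) : V) : E2n n) = Real.cos φ • w k := by
    intro k
    rw [← Submodule.starProjection_apply]
    refine Submodule.eq_starProjection_of_mem_of_inner_eq_zero (Submodule.smul_mem _ _ (hwV k)) ?_
    intro x hx
    rw [hJu k, add_sub_cancel_left]
    exact hqV k x hx
  have hPw : ∀ k, ((Submodule.orthogonalProjection V (Jc2 (w k)) : V) : E2n n) = (-Real.cos φ) • u k := by
    intro k
    rw [← Submodule.starProjection_apply]
    refine Submodule.eq_starProjection_of_mem_of_inner_eq_zero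
      (Submodule.smul_mem _ _ (huV k)) ?_
    intro x hx
    rw [hJw k, add_sub_cancel_left]
    exact hq'V k x hx
  -- norms of combinations
  have hnorm : ∀ cc : Fin n ⊕ Fin n → ℝ, ‖∑ i, cc i • g i‖ ^ 2 = ∑ i, cc i ^ 2 := by
    intro cc
    rw [← real_inner_self_eq_norm_sq, hg.inner_sum]
    simp [sq]
  constructor
  · rw [hVdef, hrange, finrank_span_eq_card hg.linearIndependent]
    simp only [Fintype.card_sum, Fintype.card_fin]
    ring
  · intro v hv
    rw [hVdef, hrange, Submodule.mem_span_range_iff_exists_fun] at hv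
    obtain ⟨a, rfl⟩ := hv
    set cc : Fin n ⊕ Fin n → ℝ :=
      Sum.elim (fun k => -(a (Sum.inr k)) * Real.cos φ) (fun k => a (Sum.inl k) * Real.cos φ)
      with hccdef
    have key : ((Submodule.orthogonalProjection V (Jc2 (∑ i, a i • g i)) : V) : E2n n)
        = ∑ i, cc i • g i := by
      have h1 : Jc2 (∑ i, a i • g i) = ∑ i, a i • Jc2 (g i) := by
        rw [Jc2_sum]
        exact Finset.sum_congr rfl fun i _ => Jc2_smul _ _
      rw [h1, map_sum]
      push_cast
      simp only [map_smul]
      push_cast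
      rw [Fintype.sum_sum_type, Fintype.sum_sum_type]
      simp only [hgdef, hccdef, Sum.elim_inl, Sum.elim_inr, hPu, hPw]
      rw [add_comm]
      congr 1 <;> exact Finset.sum_congr rfl fun k _ => by module
    rw [key, hnorm, hnorm, Finset.mul_sum, Fintype.sum_sum_type, Fintype.sum_sum_type]
    simp only [hccdef, Sum.elim_inl, Sum.elim_inr]
    rw [add_comm]
    congr 1 <;> exact Finset.sum_congr rfl fun k _ => by ring

end KA

/-- Given two `ℂ`-orthonormal bases `e`, `f` of `ℂ^n` and `φ ∈ [0, π/2)`, the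
real span in `ℂ^{2n} = ℂ^n ⊕ ℂ^n` of the `2n` vectors
`(cos(φ/2)·e_k, sin(φ/2)·J f_k)` and `(cos(φ/2)·J e_k, sin(φ/2)·f_k)` is a real
subspace of real dimension `2n` with constant Kähler angle `φ`. -/
theorem span_constKahlerAngle_of_orthonormal_bases (n : ℕ) (hn : 1 ≤ n)
    (φ : ℝ) (hφ0 : 0 ≤ φ) (hφ1 : φ < Real.pi / 2)
    (e f : Fin n → En n)
    (he : Orthonormal ℂ e) (hespan : Submodule.span ℂ (Set.range e) = ⊤)
    (hf : Orthonormal ℂ f) (hfspan : Submodule.span ℂ (Set.range f) = ⊤) :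
    Module.finrank ℝ
      (Submodule.span ℝ
        (Set.range (fun k : Fin n => ((WithLp.equiv 2 (En n × En n)).symm
            (Real.cos (φ / 2) • e k, Real.sin (φ / 2) • Jc (f k)))) ∪
         Set.range (fun k : Fin n => ((WithLp.equiv 2 (En n × En n)).symm
            (Real.cos (φ / 2) • Jc (e k), Real.sin (φ / 2) • f k))))) = 2 * n ∧
    HasConstKahlerAngle2
      (Submodule.span ℝ
        (Set.range (fun k : Fin n => ((WithLp.equiv 2 (En n × En n)).symm
            (Real.cos (φ / 2) • e k, Real.sin (φ / 2) • Jc (f k)))) ∪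
         Set.range (fun k : Fin n => ((WithLp.equiv 2 (En n × En n)).symm
            (Real.cos (φ / 2) • Jc (e k), Real.sin (φ / 2) • f k))))) φ := by
  have hcs : Real.cos (φ / 2) ^ 2 + Real.sin (φ / 2) ^ 2 = 1 := by
    rw [add_comm]; exact Real.sin_sq_add_cos_sq _
  have hco : Real.cos φ = Real.cos (φ / 2) ^ 2 - Real.sin (φ / 2) ^ 2 := by
    have h2 := Real.cos_two_mul (φ / 2)
    rw [show 2 * (φ / 2) = φ by ring] at h2
    linarith
  exact KA.main e f he hf _ _ φ hcs hco _ _ (fun k => rfl) (fun k => rfl)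
end
end
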